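/- Let (x_K)_{K≥1} ⊆ {0,1}^ℤ be a good sequence with coordinatewise limit x and associated sequence (N_i) and measures ν_K (K ∈ ℕ ∪ {∞}). Suppose that for each K the subshift [𝟎, x_K]‾ (the closure of {σ^n y : y ≤ x_K, n ∈ ℤ}) is measure-theoretically subordinate with base measure ν_K. Then both ⋂_{K≥1} [𝟎, x_K]‾ and [𝟎, x]‾ are measure-theoretically subordinate subshifts with base measure ν_∞ = lim_K ν_K. -/

import Mathlib

open MeasureTheory Filter Topology

/-- The full shift space `{0,1}^ℤ`, with `Bool` playing the role of `{0,1}`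
(`false` ↔ `0`, `true` ↔ `1`). -/
abbrev BinSeq : Type := ℤ → Bool

/-- The left shift `σ`. -/
def shift : BinSeq → BinSeq := fun x n => x (n + 1)

/-- The product shift `σ × σ`. -/
def shift2 : BinSeq × BinSeq → BinSeq × BinSeq := Prod.map shift shift

/-- The product shift `σ × σ × σ` on triples `((w,x),y)`. -/
def shift3 : (BinSeq × BinSeq) × BinSeq → (BinSeq × BinSeq) × BinSeq := Prod.map shift2 shift

/-- Coordinatewise multiplication `M(x,y)` of two 0-1 sequences. -/
def Mmul : BinSeq × BinSeq → BinSeq := fun p n => p.1 n && p.2 n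

/-- The map `N((w,x),y) = (1-y)·w + y·x` (coordinatewise: `x` where `y = 1`, `w` where `y = 0`). -/
def Nmap : (BinSeq × BinSeq) × BinSeq → BinSeq := fun t n => bif t.2 n then t.1.2 n else t.1.1 n

/-- The coordinatewise partial order `y ≤ x` on `{0,1}^ℤ`. -/
def leSeq (y x : BinSeq) : Prop := ∀ n, y n ≤ x n

/-- A subshift: a closed, shift-invariant subset of `{0,1}^ℤ`. -/
def IsSubshift (X : Set BinSeq) : Prop := IsClosed X ∧ shift ⁻¹' X = X

/-- The set of `T`-invariant Borel probability measures. -/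
def InvProb {α : Type*} [MeasurableSpace α] (T : α → α) : Set (Measure α) :=
  {μ | IsProbabilityMeasure μ ∧ Measure.map T μ = μ}

/-- `𝓜(X)`: shift-invariant Borel probability measures concentrated on `X`. -/
def MeasOn (X : Set BinSeq) : Set (Measure BinSeq) :=
  {μ | μ ∈ InvProb shift ∧ μ X = 1}

/-- `𝓜(Z)` for `Z ⊆ {0,1}^ℤ × {0,1}^ℤ`. -/
def MeasOn2 (Z : Set (BinSeq × BinSeq)) : Set (Measure (BinSeq × BinSeq)) :=
  {ρ | ρ ∈ InvProb shift2 ∧ ρ Z = 1}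

/-- `X` is a measure-theoretically subordinate subshift with base measure `ν`:
`𝓜(X) = {M_*(ρ) : ρ ∈ 𝓜({0,1}^ℤ × {0,1}^ℤ, σ×σ), (π₁)_*(ρ) = ν}`. -/
def Subord (X : Set BinSeq) (ν : Measure BinSeq) : Prop :=
  MeasOn X = {μ | ∃ ρ ∈ InvProb shift2,
    Measure.map Prod.fst ρ = ν ∧ Measure.map Mmul ρ = μ}

/-- `X` is a sandwich measure-theoretically subordinate subshift with pre-base measure `ρ`:
`𝓜(X) = {N_*(κ) : κ ∈ 𝓜(({0,1}^ℤ)³), (π₁,₂)_*(κ) = ρ}`. -/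
def SandwichSubord (X : Set BinSeq) (ρ : Measure (BinSeq × BinSeq)) : Prop :=
  MeasOn X = {μ | ∃ κ ∈ InvProb shift3,
    Measure.map Prod.fst κ = ρ ∧ Measure.map Nmap κ = μ}

/-- `ρ({(w,x) : w ≤ x coordinatewise}) = 1`: a pre-base measure satisfying this is a base
measure. -/
def AboveDiag (ρ : Measure (BinSeq × BinSeq)) : Prop :=
  ρ {p : BinSeq × BinSeq | ∀ n, p.1 n ≤ p.2 n} = 1

/-- The cylinder `{x : x₀ = b}`. -/
def cylB (b : Bool) : Set BinSeq := {x : BinSeq | x 0 = b}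

/-- The set `[w,x] = {σ^k y : w ≤ y ≤ x, k ∈ ℤ}`. -/
def sandwichSet (w x : BinSeq) : Set BinSeq :=
  {z | ∃ (k : ℤ) (y : BinSeq), (∀ n, w n ≤ y n) ∧ (∀ n, y n ≤ x n) ∧ z = fun n => y (n + k)}

/-- Topological entropy (base-2) of a subshift: exponential growth rate of the number of
`n`-blocks appearing in `X`. -/
noncomputable def htop (X : Set BinSeq) : ℝ :=
  Filter.limsup (fun n : ℕ =>
    Real.logb 2
      ((Set.ncard {A : Fin n → Bool | ∃ x ∈ X, ∀ i : Fin n, x ((i : ℕ) : ℤ) = A i} : ℝ))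
      / (n : ℝ)) Filter.atTop

/-- Kolmogorov–Sinai entropy (base-2) of a shift-invariant measure on `{0,1}^ℤ`,
computed via the generating partition into cylinders. -/
noncomputable def entropy (μ : Measure BinSeq) : ℝ :=
  Filter.limsup (fun n : ℕ =>
    (∑ A : Fin n → Bool,
      Real.negMulLog ((μ {x : BinSeq | ∀ i : Fin n, x ((i : ℕ) : ℤ) = A i}).toReal))
      / ((n : ℝ) * Real.log 2)) Filter.atTop

/-- Kolmogorov–Sinai entropy (base-2) of a `σ×σ`-invariant measure on
`{0,1}^ℤ × {0,1}^ℤ`. -/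
noncomputable def entropy2 (ρ : Measure (BinSeq × BinSeq)) : ℝ :=
  Filter.limsup (fun n : ℕ =>
    (∑ A : Fin n → Bool, ∑ B : Fin n → Bool,
      Real.negMulLog ((ρ {p : BinSeq × BinSeq |
        (∀ i : Fin n, p.1 ((i : ℕ) : ℤ) = A i) ∧
        (∀ i : Fin n, p.2 ((i : ℕ) : ℤ) = B i)}).toReal))
      / ((n : ℝ) * Real.log 2)) Filter.atTop

open scoped Classical in
/-- Topological pressure (base-2) of a subshift `X` with potential `φ`:
`𝒫_{X,φ} = lim (1/n) log₂ Σ_{A ∈ ℒ_n(X)} 2^{sup_{x ∈ [A] ∩ X} φ⁽ⁿ⁾(x)}`. -/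
noncomputable def pressure (X : Set BinSeq) (φ : BinSeq → ℝ) : ℝ :=
  Filter.limsup (fun n : ℕ =>
    Real.logb 2 (∑ A : Fin n → Bool,
      if ∃ x ∈ X, ∀ i : Fin n, x ((i : ℕ) : ℤ) = A i then
        (2 : ℝ) ^ sSup {r : ℝ | ∃ x ∈ X, (∀ i : Fin n, x ((i : ℕ) : ℤ) = A i) ∧
          r = ∑ k ∈ Finset.range n, φ (shift^[k] x)}
      else 0) / (n : ℝ)) Filter.atTop

/-- Birkhoff average of a continuous function along the first `N` points of the `T`-orbit. -/
noncomputable def birkAvg {α : Type*} [TopologicalSpace α] (T : α → α) (x : α) (N : ℕ)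
    (f : C(α, ℝ)) : ℝ :=
  (∑ n ∈ Finset.range N, f (T^[n] x)) / (N : ℝ)

/-- `x` is quasi-generic for `μ` along `(N i)`: the empirical measures
`(1/N_i) Σ_{n<N_i} δ_{T^n x}` converge weakly-* to `μ`. -/
def QuasiGenericAlong {α : Type*} [TopologicalSpace α] [MeasurableSpace α]
    (T : α → α) (x : α) (N : ℕ → ℕ) (μ : Measure α) : Prop :=
  ∀ f : C(α, ℝ), Filter.Tendsto (fun i => birkAvg T x (N i) f) Filter.atTop
    (nhds (∫ y, f y ∂μ))

/-- `x` is generic for `μ`. -/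
def GenericFor {α : Type*} [TopologicalSpace α] [MeasurableSpace α]
    (T : α → α) (x : α) (μ : Measure α) : Prop :=
  QuasiGenericAlong T x (fun i => i) μ

/-- Weak-* convergence of a sequence of measures. -/
def WeakTendsto {α : Type*} [TopologicalSpace α] [MeasurableSpace α]
    (μs : ℕ → Measure α) (μ : Measure α) : Prop :=
  ∀ f : C(α, ℝ), Filter.Tendsto (fun K => ∫ y, f y ∂(μs K)) Filter.atTop
    (nhds (∫ y, f y ∂μ))

/-- `V(y)`: the invariant measures for which `y` is quasi-generic (along some
increasing sequence). -/
def Vset (y : BinSeq) : Set (Measure BinSeq) :=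
  {μ | μ ∈ InvProb shift ∧ ∃ N : ℕ → ℕ, StrictMono N ∧ QuasiGenericAlong shift y N μ}

/-- `V_{(N_i)}(y)`: the invariant measures for which `y` is quasi-generic along a
subsequence of `(N_i)`. -/
def VsetAlong (N : ℕ → ℕ) (y : BinSeq) : Set (Measure BinSeq) :=
  {μ | μ ∈ InvProb shift ∧ ∃ φ : ℕ → ℕ, StrictMono φ ∧ QuasiGenericAlong shift y (N ∘ φ) μ}

/-- `β` is the Bernoulli product measure on `{0,1}^ℤ` with `β({x : x₀ = 0}) = p`. -/
def IsBernoulli (p : ENNReal) (β : Measure BinSeq) : Prop :=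
  IsProbabilityMeasure β ∧ ∀ (s : Finset ℤ) (A : ℤ → Bool),
    β {x : BinSeq | ∀ i ∈ s, x i = A i} = ∏ i ∈ s, (if A i = false then p else 1 - p)


section Stmt5Aux
open scoped Classical

-- §0 basics
lemma shift_iterate (y : BinSeq) (n : ℕ) (p : ℤ) : shift^[n] y p = y (p + n) := by
  induction n generalizing p with
  | zero => simp
  | succ n ih =>
    rw [Function.iterate_succ_apply']
    show shift^[n] y (p + 1) = _
    rw [ih]
    congr 1
    push_cast
    ring

lemma continuous_shift : Continuous shift :=
  continuous_pi fun n => continuous_apply (n + 1)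

lemma measurable_shift : Measurable shift :=
  measurable_pi_lambda _ fun n => measurable_pi_apply (n + 1)

lemma continuous_shift2 : Continuous shift2 :=
  continuous_shift.prodMap continuous_shift

lemma measurable_shift2 : Measurable shift2 :=
  (measurable_shift.comp measurable_fst).prodMk (measurable_shift.comp measurable_snd)

lemma continuous_Mmul : Continuous Mmul := by
  apply continuous_pi
  intro n
  have h1 : Continuous fun p : BinSeq × BinSeq => p.1 n :=
    (continuous_apply n).comp continuous_fst
  have h2 : Continuous fun p : BinSeq × BinSeq => p.2 n :=
    (continuous_apply n).comp continuous_snd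
  exact (continuous_of_discreteTopology (f := fun q : Bool × Bool => q.1 && q.2)).comp
    (h1.prodMk h2)

lemma measurable_Mmul : Measurable Mmul := continuous_Mmul.measurable

-- §1 window-determined sets
def wdet (m : ℕ) (D : Set BinSeq) : Prop :=
  ∀ y z : BinSeq, (∀ i : ℤ, |i| ≤ (m : ℤ) → y i = z i) → (y ∈ D ↔ z ∈ D)

def wproj (m : ℕ) : BinSeq → (Fin (2 * m + 1) → Bool) := fun y k => y ((k : ℤ) - m)

lemma wproj_eq_iff {m : ℕ} {y z : BinSeq} :
    wproj m y = wproj m z ↔ ∀ i : ℤ, |i| ≤ (m : ℤ) → y i = z i := by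
  constructor
  · intro h i hi
    rw [abs_le] at hi
    have hk : ((i + m).toNat) < 2 * m + 1 := by omega
    have h2 := congrFun h ⟨(i + m).toNat, hk⟩
    simp only [wproj] at h2
    have h3 : ((((i + m).toNat : ℕ) : ℤ)) - m = i := by omega
    rwa [h3] at h2
  · intro h
    funext k
    exact h _ (by rw [abs_le]; constructor <;> [omega; (have := k.2; omega)])

lemma measurable_wproj (m : ℕ) : Measurable (wproj m) :=
  measurable_pi_lambda _ fun k => measurable_pi_apply _

lemma continuous_wproj (m : ℕ) : Continuous (wproj m) :=
  continuous_pi fun k => continuous_apply _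

lemma measurableSet_finBool {n : ℕ} (S : Set (Fin n → Bool)) : MeasurableSet S := by
  have : S = ⋃ s ∈ S, {s} := by simp
  rw [this]
  refine MeasurableSet.biUnion (Set.to_countable S) ?_
  intro s _
  have : ({s} : Set (Fin n → Bool)) = ⋂ k, (fun f => f k) ⁻¹' {s k} := by
    ext f; simp [funext_iff]
  rw [this]
  exact MeasurableSet.iInter fun k => measurable_pi_apply k (MeasurableSet.singleton _)

lemma wdet.eq_preimage {m : ℕ} {D : Set BinSeq} (h : wdet m D) :
    D = wproj m ⁻¹' (wproj m '' D) := by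
  ext y
  constructor
  · exact fun hy => Set.mem_image_of_mem _ hy
  · rintro ⟨z, hz, hzy⟩
    exact (h z y (wproj_eq_iff.mp hzy)).mp hz

lemma wdet.measurableSet {m : ℕ} {D : Set BinSeq} (h : wdet m D) : MeasurableSet D := by
  rw [h.eq_preimage]
  exact measurable_wproj m (measurableSet_finBool _)

lemma wdet.isOpen {m : ℕ} {D : Set BinSeq} (h : wdet m D) : IsOpen D := by
  rw [h.eq_preimage]
  exact (continuous_wproj m).isOpen_preimage _ (isOpen_discrete _)

lemma wdet.compl {m : ℕ} {D : Set BinSeq} (h : wdet m D) : wdet m Dᶜ := by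
  intro y z hyz
  simp [h y z hyz]

/-- indicator of a window-determined set, as a continuous map -/
noncomputable def indC {m : ℕ} {D : Set BinSeq} (h : wdet m D) : C(BinSeq, ℝ) where
  toFun := D.indicator fun _ => (1 : ℝ)
  continuous_toFun := by
    have hO : IsOpen D := h.isOpen
    have hC : IsOpen Dᶜ := h.compl.isOpen
    rw [continuous_def]
    intro s _
    have : (D.indicator fun _ => (1:ℝ)) ⁻¹' s =
        (if (1:ℝ) ∈ s then D else ∅) ∪ (if (0:ℝ) ∈ s then Dᶜ else ∅) := by
      ext y
      by_cases hy : y ∈ D <;> by_cases h1 : (1:ℝ) ∈ s <;> by_cases h0 : (0:ℝ) ∈ s <;>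
        simp [hy, h1, h0, Set.indicator_apply]
    rw [this]
    refine IsOpen.union ?_ ?_ <;> split <;> simp [hO, hC, isOpen_empty]

lemma indC_apply {m : ℕ} {D : Set BinSeq} (h : wdet m D) (y : BinSeq) :
    indC h y = if y ∈ D then (1 : ℝ) else 0 := by
  rw [show (indC h) y = D.indicator (fun _ => (1:ℝ)) y from rfl, Set.indicator_apply]

lemma integral_indC {m : ℕ} {D : Set BinSeq} (h : wdet m D) (ν : Measure BinSeq)
    [IsProbabilityMeasure ν] : ∫ y, indC h y ∂ν = (ν D).toReal := by
  have h2 : (fun y => indC h y) = D.indicator (fun _ => (1:ℝ)) := rfl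
  rw [h2, integral_indicator_const (1:ℝ) h.measurableSet, smul_eq_mul, mul_one]
  rfl

-- §2 sum estimates and the heart lemma

lemma sum_range_eq_sum_Ico_shift (c : ℤ → ℝ) (d : ℤ) (N : ℕ) :
    ∑ n ∈ Finset.range N, c ((n : ℤ) + d) = ∑ q ∈ Finset.Ico d ((N : ℤ) + d), c q := by
  induction N with
  | zero => simp
  | succ N ih =>
    have hins : Finset.Ico d (((N : ℤ) + d) + 1) = insert ((N:ℤ)+d) (Finset.Ico d ((N:ℤ)+d)) := by
      ext q
      simp only [Finset.mem_Ico, Finset.mem_insert]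
      omega
    rw [Finset.sum_range_succ, ih, show ((N + 1 : ℕ) : ℤ) + d = ((N : ℤ) + d) + 1 by push_cast; ring,
      hins, Finset.sum_insert Finset.right_notMem_Ico]
    ring

lemma sum_range_eq_sum_Ico (c : ℤ → ℝ) (N : ℕ) :
    ∑ n ∈ Finset.range N, c (n : ℤ) = ∑ q ∈ Finset.Ico (0 : ℤ) (N : ℤ), c q := by
  have := sum_range_eq_sum_Ico_shift c 0 N
  simpa using this

lemma edge_sum_le (c : ℤ → ℝ) (h1 : ∀ q, c q ≤ 1) (a b : ℤ) :
    ∑ q ∈ Finset.Ico a b, c q ≤ ((b - a).toNat : ℝ) := by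
  calc ∑ q ∈ Finset.Ico a b, c q ≤ (Finset.Ico a b).card • (1 : ℝ) :=
        Finset.sum_le_card_nsmul _ _ _ (fun q _ => h1 q)
    _ = ((b - a).toNat : ℝ) := by rw [Int.card_Ico, nsmul_eq_mul, mul_one]

lemma sum_Ico_split (c : ℤ → ℝ) (a b d : ℤ) (h1 : a ≤ b) (h2 : b ≤ d) :
    ∑ q ∈ Finset.Ico a b, c q + ∑ q ∈ Finset.Ico b d, c q = ∑ q ∈ Finset.Ico a d, c q := by
  rw [← Finset.sum_union]
  · congr 1
    ext q
    simp only [Finset.mem_union, Finset.mem_Ico]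
    omega
  · rw [Finset.disjoint_left]
    intro q hq hq2
    simp only [Finset.mem_Ico] at hq hq2
    omega

lemma shifted_sum_le (c : ℤ → ℝ) (hc0 : ∀ q, 0 ≤ c q) (hc1 : ∀ q, c q ≤ 1) (m : ℕ) (d : ℤ)
    (hd : |d| ≤ (m : ℤ)) (N : ℕ) :
    ∑ n ∈ Finset.range N, c ((n : ℤ) + d) ≤ (∑ n ∈ Finset.range N, c (n : ℤ)) + 2 * m := by
  rw [abs_le] at hd
  obtain ⟨hd1, hd2⟩ := hd
  rw [sum_range_eq_sum_Ico_shift, sum_range_eq_sum_Ico]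
  have hsub : Finset.Ico d ((N : ℤ) + d) ⊆ Finset.Ico (-(m : ℤ)) ((N : ℤ) + m) := by
    intro q hq
    simp only [Finset.mem_Ico] at hq ⊢
    omega
  have h1 : ∑ q ∈ Finset.Ico d ((N : ℤ) + d), c q ≤
      ∑ q ∈ Finset.Ico (-(m : ℤ)) ((N : ℤ) + m), c q :=
    Finset.sum_le_sum_of_subset_of_nonneg hsub (fun q _ _ => hc0 q)
  have e1 : ∑ q ∈ Finset.Ico (-(m:ℤ)) (0:ℤ), c q + ∑ q ∈ Finset.Ico (0:ℤ) ((N:ℤ) + m), c q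
      = ∑ q ∈ Finset.Ico (-(m:ℤ)) ((N:ℤ) + m), c q :=
    sum_Ico_split c _ _ _ (by omega) (by omega)
  have e2 : ∑ q ∈ Finset.Ico (0:ℤ) ((N:ℤ)), c q + ∑ q ∈ Finset.Ico ((N:ℤ)) ((N:ℤ) + m), c q
      = ∑ q ∈ Finset.Ico (0:ℤ) ((N:ℤ) + m), c q :=
    sum_Ico_split c _ _ _ (by omega) (by omega)
  have b1 : ∑ q ∈ Finset.Ico (-(m:ℤ)) (0:ℤ), c q ≤ (m : ℝ) := by
    have := edge_sum_le c hc1 (-(m:ℤ)) 0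
    simpa using this
  have b2 : ∑ q ∈ Finset.Ico ((N:ℤ)) ((N:ℤ) + m), c q ≤ (m : ℝ) := by
    have := edge_sum_le c hc1 ((N:ℤ)) ((N:ℤ) + m)
    simpa using this
  have := h1
  rw [← e1, ← e2] at this
  linarith

lemma cylB_wdet : wdet 0 (cylB true) := by
  intro y z h
  have h0 := h 0 (by simp)
  simp [cylB, h0]

lemma heart
    (x : ℕ → BinSeq) (xinf : BinSeq) (N : ℕ → ℕ)
    (ν : ℕ → Measure BinSeq) (νinf : Measure BinSeq)
    (hle : ∀ K n, xinf n ≤ x K n)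
    (hN : StrictMono N)
    (hP : ∀ K, ν K ∈ InvProb shift) (hPinf : νinf ∈ InvProb shift)
    (hqg : ∀ K, QuasiGenericAlong shift (x K) N (ν K))
    (hqginf : QuasiGenericAlong shift xinf N νinf)
    (hdens : Tendsto (fun K => ((ν K) (cylB true)).toReal) atTop
      (𝓝 ((νinf (cylB true)).toReal)))
    {m : ℕ} {D : Set BinSeq} (hD : wdet m D) :
    Tendsto (fun K => ((ν K) D).toReal) atTop (𝓝 ((νinf D).toReal)) := by
  haveI : IsProbabilityMeasure νinf := hPinf.1
  set f := indC hD with hf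
  set g := indC cylB_wdet with hg
  have hGg : ∀ (y : BinSeq) (n : ℕ), g (shift^[n] y) = (if y (n : ℤ) then (1:ℝ) else 0) := by
    intro y n
    rw [hg, indC_apply]
    have : shift^[n] y ∈ cylB true ↔ y (n : ℤ) = true := by
      rw [cylB, Set.mem_setOf_eq, shift_iterate, zero_add]
    simp only [this]
  have main : ∀ K, |((ν K) D).toReal - (νinf D).toReal| ≤
      (2*(m:ℝ)+1) * (((ν K) (cylB true)).toReal - ((νinf (cylB true)).toReal)) := by
    intro K
    haveI : IsProbabilityMeasure (ν K) := (hP K).1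
    set c : ℤ → ℝ := fun q => (if x K q then (1:ℝ) else 0) - (if xinf q then (1:ℝ) else 0)
      with hc
    have hc0 : ∀ q, 0 ≤ c q := by
      intro q
      have hlq := hle K q
      simp only [hc]
      rcases h1 : xinf q with _ | _ <;> rcases h2 : x K q with _ | _
      · simp [h1, h2]
      · simp [h1, h2]
      · rw [h1, h2] at hlq; exact absurd hlq (by decide)
      · simp [h1, h2]
    have hc1 : ∀ q, c q ≤ 1 := by
      intro q
      simp only [hc]
      rcases h1 : xinf q with _ | _ <;> rcases h2 : x K q with _ | _ <;>
        simp [h1, h2]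
    have hpt : ∀ n : ℕ, |f (shift^[n] (x K)) - f (shift^[n] xinf)| ≤
        ∑ k ∈ Finset.range (2*m+1), c ((n:ℤ) + ((k:ℤ) - m)) := by
      intro n
      by_cases hag : ∀ i : ℤ, |i| ≤ (m:ℤ) → shift^[n] (x K) i = shift^[n] xinf i
      · have heq : f (shift^[n] (x K)) = f (shift^[n] xinf) := by
          rw [hf, indC_apply, indC_apply]
          simp only [hD _ _ hag]
        rw [heq, sub_self, abs_zero]
        exact Finset.sum_nonneg fun k _ => hc0 _
      · push_neg at hag
        obtain ⟨i, hi, hne⟩ := hag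
        rw [abs_le] at hi
        have hKi : x K (i + n) ≠ xinf (i + n) := by
          rw [shift_iterate, shift_iterate] at hne
          exact hne
        have hci : c (i + n) = 1 := by
          have hlq := hle K (i + n)
          simp only [hc]
          rcases h1 : xinf (i+n) with _ | _ <;> rcases h2 : x K (i+n) with _ | _
          · rw [h1, h2] at hKi; exact absurd rfl hKi
          · simp [h1, h2]
          · rw [h1, h2] at hlq; exact absurd hlq (by decide)
          · rw [h1, h2] at hKi; exact absurd rfl hKi
        have habs : |f (shift^[n] (x K)) - f (shift^[n] xinf)| ≤ 1 := by
          rw [hf, indC_apply, indC_apply]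
          split <;> split <;> norm_num
        have hk : ((i + m).toNat) ∈ Finset.range (2*m+1) :=
          Finset.mem_range.mpr (by omega)
        calc |f (shift^[n] (x K)) - f (shift^[n] xinf)| ≤ 1 := habs
          _ = c ((n:ℤ) + ((((i + m).toNat : ℕ) : ℤ) - m)) := by
              rw [show ((n:ℤ) + ((((i + m).toNat : ℕ) : ℤ) - m)) = i + n by omega, hci]
          _ ≤ ∑ k ∈ Finset.range (2*m+1), c ((n:ℤ) + ((k:ℤ) - m)) :=
              Finset.single_le_sum (f := fun k : ℕ => c ((n:ℤ) + ((k:ℤ) - m)))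
                (fun k _ => hc0 _) hk
    have sum_bound : ∀ Ni : ℕ,
        |birkAvg shift (x K) Ni f - birkAvg shift xinf Ni f| ≤
        (2*(m:ℝ)+1) * ((∑ n ∈ Finset.range Ni, c (n:ℤ)) / Ni) + (2*(m:ℝ)+1)*(2*m)/Ni := by
      intro Ni
      rcases Nat.eq_zero_or_pos Ni with h0 | hpos
      · simp [h0, birkAvg]
      have hNpos : (0:ℝ) < (Ni : ℝ) := by exact_mod_cast hpos
      rw [birkAvg, birkAvg, div_sub_div_same, abs_div, abs_of_pos hNpos,
        ← Finset.sum_sub_distrib]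
      have h1 : |∑ n ∈ Finset.range Ni, (f (shift^[n] (x K)) - f (shift^[n] xinf))| ≤
          ∑ n ∈ Finset.range Ni, ∑ k ∈ Finset.range (2*m+1), c ((n:ℤ) + ((k:ℤ)-m)) :=
        (Finset.abs_sum_le_sum_abs _ _).trans (Finset.sum_le_sum fun n _ => hpt n)
      have h2 : ∑ n ∈ Finset.range Ni, ∑ k ∈ Finset.range (2*m+1), c ((n:ℤ) + ((k:ℤ)-m))
          = ∑ k ∈ Finset.range (2*m+1), ∑ n ∈ Finset.range Ni, c ((n:ℤ) + ((k:ℤ)-m)) :=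
        Finset.sum_comm
      have h3 : ∑ k ∈ Finset.range (2*m+1), ∑ n ∈ Finset.range Ni, c ((n:ℤ) + ((k:ℤ)-m))
          ≤ (2*(m:ℝ)+1) * ((∑ n ∈ Finset.range Ni, c (n:ℤ)) + 2*m) := by
        have hb : ∀ k ∈ Finset.range (2*m+1),
            ∑ n ∈ Finset.range Ni, c ((n:ℤ) + ((k:ℤ)-m)) ≤
            (∑ n ∈ Finset.range Ni, c (n:ℤ)) + 2*m := by
          intro k hk
          rw [Finset.mem_range] at hk
          exact shifted_sum_le c hc0 hc1 m _ (by rw [abs_le]; omega) Ni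
        calc ∑ k ∈ Finset.range (2*m+1), ∑ n ∈ Finset.range Ni, c ((n:ℤ) + ((k:ℤ)-m))
            ≤ ∑ _k ∈ Finset.range (2*m+1), ((∑ n ∈ Finset.range Ni, c (n:ℤ)) + 2*m) :=
              Finset.sum_le_sum hb
          _ = (2*(m:ℝ)+1) * ((∑ n ∈ Finset.range Ni, c (n:ℤ)) + 2*m) := by
              rw [Finset.sum_const, Finset.card_range, nsmul_eq_mul]
              push_cast
              ring
      calc |∑ n ∈ Finset.range Ni, (f (shift^[n] (x K)) - f (shift^[n] xinf))| / (Ni:ℝ)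
          ≤ ((2*(m:ℝ)+1) * ((∑ n ∈ Finset.range Ni, c (n:ℤ)) + 2*(m:ℝ))) / (Ni:ℝ) := by
            gcongr
            exact h1.trans (le_of_le_of_eq (le_of_eq h2) rfl |>.trans (by push_cast at h3 ⊢; linarith))
        _ = (2*(m:ℝ)+1) * ((∑ n ∈ Finset.range Ni, c (n:ℤ)) / (Ni:ℝ))
            + (2*(m:ℝ)+1)*(2*(m:ℝ))/(Ni:ℝ) := by
            field_simp
    have hA : Tendsto (fun i => birkAvg shift (x K) (N i) f) atTop
        (𝓝 (((ν K) D).toReal)) := by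
      have h := hqg K f
      rwa [integral_indC hD] at h
    have hB : Tendsto (fun i => birkAvg shift xinf (N i) f) atTop (𝓝 ((νinf D).toReal)) := by
      have h := hqginf f
      rwa [integral_indC hD] at h
    have hgK : Tendsto (fun i => birkAvg shift (x K) (N i) g) atTop
        (𝓝 (((ν K) (cylB true)).toReal)) := by
      have h := hqg K g
      rwa [integral_indC cylB_wdet] at h
    have hginf : Tendsto (fun i => birkAvg shift xinf (N i) g) atTop
        (𝓝 ((νinf (cylB true)).toReal)) := by
      have h := hqginf g
      rwa [integral_indC cylB_wdet] at h
    have hSc : ∀ i : ℕ, (∑ n ∈ Finset.range (N i), c (n:ℤ)) / (N i : ℝ) =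
        birkAvg shift (x K) (N i) g - birkAvg shift xinf (N i) g := by
      intro i
      rw [birkAvg, birkAvg, div_sub_div_same, ← Finset.sum_sub_distrib]
      congr 1
      refine Finset.sum_congr rfl fun n _ => ?_
      rw [hGg, hGg, hc]
    have hdiv : Tendsto (fun i : ℕ => (2*(m:ℝ)+1)*(2*(m:ℝ))/(N i : ℝ)) atTop (𝓝 0) :=
      (tendsto_const_div_atTop_nhds_zero_nat ((2*(m:ℝ)+1)*(2*(m:ℝ)))).comp hN.tendsto_atTop
    have hRHS : Tendsto (fun i => (2*(m:ℝ)+1) * ((∑ n ∈ Finset.range (N i), c (n:ℤ)) / (N i:ℝ))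
        + (2*(m:ℝ)+1)*(2*(m:ℝ))/(N i:ℝ)) atTop
        (𝓝 ((2*(m:ℝ)+1) * ((((ν K) (cylB true)).toReal) - ((νinf (cylB true)).toReal)) + 0)) := by
      refine Tendsto.add ?_ hdiv
      refine Tendsto.const_mul _ ?_
      simp_rw [hSc]
      exact hgK.sub hginf
    rw [add_zero] at hRHS
    have hLHS : Tendsto (fun i => |birkAvg shift (x K) (N i) f - birkAvg shift xinf (N i) f|)
        atTop (𝓝 |((ν K) D).toReal - (νinf D).toReal|) := (hA.sub hB).abs
    exact le_of_tendsto_of_tendsto' hLHS hRHS (fun i => sum_bound (N i))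
  have hub : Tendsto (fun K => (2*(m:ℝ)+1) * (((ν K) (cylB true)).toReal
      - ((νinf (cylB true)).toReal))) atTop
      (𝓝 ((2*(m:ℝ)+1) * (((νinf (cylB true)).toReal) - ((νinf (cylB true)).toReal)))) :=
    (hdens.sub tendsto_const_nhds).const_mul _
  rw [sub_self, mul_zero] at hub
  have hsq : Tendsto (fun K => ((ν K) D).toReal - (νinf D).toReal) atTop (𝓝 0) :=
    squeeze_zero_norm (fun K => by simpa [Real.norm_eq_abs] using main K) hub
  have hfin := hsq.add (tendsto_const_nhds (x := (νinf D).toReal) (f := atTop))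
  rw [zero_add] at hfin
  simpa using hfin

-- §3 sandwich sets, closure properties, full measure, ext lemma

lemma mem_sandwich_orbit (x : BinSeq) (n : ℕ) :
    shift^[n] x ∈ sandwichSet (fun _ => false) x := by
  refine ⟨(n : ℤ), x, fun q => Bool.false_le _, fun q => le_refl _, ?_⟩
  funext p
  rw [shift_iterate]

lemma closure_sandwich_downward (x : BinSeq) {w u : BinSeq}
    (hw : w ∈ closure (sandwichSet (fun _ => false) x)) (hu : ∀ n, u n ≤ w n) :
    u ∈ closure (sandwichSet (fun _ => false) x) := by
  set S := sandwichSet (fun _ => false) x with hS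
  set F : BinSeq → BinSeq := fun z n => u n && z n with hF
  have hcont : Continuous F := continuous_pi fun n =>
    (continuous_of_discreteTopology (f := fun b : Bool => u n && b)).comp (continuous_apply n)
  have hmaps : F '' S ⊆ S := by
    rintro _ ⟨z, ⟨k, y, h0, hy, rfl⟩, rfl⟩
    refine ⟨k, fun q => u (q - k) && y q, fun q => Bool.false_le _,
      fun q => (Bool.and_le_right _ _).trans (hy q), ?_⟩
    funext p
    show (u p && y (p + k)) = (u (p + k - k) && y (p + k))
    rw [add_sub_cancel_right]
  have hFw : F w = u := by
    funext n
    show (u n && w n) = u n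
    rcases hn : u n with _ | _
    · simp [hn]
    · have := hu n
      rw [hn] at this
      rcases hwn : w n with _ | _
      · rw [hwn] at this; exact absurd this (by decide)
      · simp
  have : F w ∈ closure S := by
    have h1 : F w ∈ F '' closure S := Set.mem_image_of_mem _ hw
    have h2 : F '' closure S ⊆ closure (F '' S) := image_closure_subset_closure_image hcont
    exact closure_mono hmaps (h2 h1)
  rwa [hFw] at this

/-- cylinder determined by a window pattern -/
def wcyl (t : Σ m : ℕ, (Fin (2 * m + 1) → Bool)) : Set BinSeq := wproj t.1 ⁻¹' {t.2}

lemma wcyl_wdet (t : Σ m : ℕ, (Fin (2 * m + 1) → Bool)) : wdet t.1 (wcyl t) := by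
  intro y z h
  have : wproj t.1 y = wproj t.1 z := wproj_eq_iff.mpr h
  simp [wcyl, this]

lemma closure_sandwich_measure_one (xinf : BinSeq) (N : ℕ → ℕ) (νinf : Measure BinSeq)
    (hPinf : νinf ∈ InvProb shift) (hqginf : QuasiGenericAlong shift xinf N νinf) :
    νinf (closure (sandwichSet (fun _ => false) xinf)) = 1 := by
  haveI : IsProbabilityMeasure νinf := hPinf.1
  set Y := closure (sandwichSet (fun _ => false) xinf) with hY
  have hYc : IsClosed Y := isClosed_closure
  have hYm : MeasurableSet Y := hYc.measurableSet
  rw [← prob_compl_eq_zero_iff hYm]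
  -- each admissible window cylinder inside Yᶜ has measure zero
  have hzero : ∀ t : Σ m : ℕ, (Fin (2 * m + 1) → Bool), wcyl t ⊆ Yᶜ → νinf (wcyl t) = 0 := by
    intro t ht
    have hqq := hqginf (indC (wcyl_wdet t))
    rw [integral_indC (wcyl_wdet t)] at hqq
    have hz : ∀ i, birkAvg shift xinf (N i) (indC (wcyl_wdet t)) = 0 := by
      intro i
      rw [birkAvg]
      have : ∀ n ∈ Finset.range (N i), indC (wcyl_wdet t) (shift^[n] xinf) = 0 := by
        intro n _
        rw [indC_apply]
        have hmem : shift^[n] xinf ∈ Y := subset_closure (mem_sandwich_orbit xinf n)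
        have : shift^[n] xinf ∉ wcyl t := fun hc => (ht hc) hmem
        simp [this]
      rw [Finset.sum_congr rfl this]
      simp
    have h0 : Tendsto (fun i => birkAvg shift xinf (N i) (indC (wcyl_wdet t))) atTop (𝓝 0) := by
      simp_rw [hz]
      exact tendsto_const_nhds
    have := tendsto_nhds_unique hqq h0
    have hne : νinf (wcyl t) ≠ ⊤ := measure_ne_top _ _
    rw [ENNReal.toReal_eq_zero_iff] at this
    tauto
  -- Yᶜ is covered by such cylinders
  have hcover : Yᶜ ⊆ ⋃ (t : Σ m : ℕ, (Fin (2 * m + 1) → Bool)) (_ : wcyl t ⊆ Yᶜ), wcyl t := by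
    intro y hy
    have hopen : IsOpen Yᶜ := hYc.isOpen_compl
    rw [isOpen_pi_iff] at hopen
    obtain ⟨I, u, hu, hsub⟩ := hopen y hy
    set m := I.sup fun i => i.natAbs with hm
    refine Set.mem_iUnion.mpr ⟨⟨m, wproj m y⟩, Set.mem_iUnion.mpr ⟨?_, rfl⟩⟩
    intro z hz
    have hzy : ∀ i : ℤ, |i| ≤ (m : ℤ) → z i = y i := by
      intro i hi
      exact (wproj_eq_iff.mp hz) i hi
    apply hsub
    intro i hi
    have h1 : i.natAbs ≤ m := Finset.le_sup (f := fun i : ℤ => i.natAbs) hi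
    have h2 : z i = y i := hzy i (by rw [Int.abs_eq_natAbs]; exact_mod_cast h1)
    rw [h2]
    exact (hu i hi).2
  have : νinf Yᶜ ≤ νinf (⋃ (t : Σ m : ℕ, (Fin (2 * m + 1) → Bool)) (_ : wcyl t ⊆ Yᶜ), wcyl t) :=
    measure_mono hcover
  have hnull : νinf (⋃ (t : Σ m : ℕ, (Fin (2 * m + 1) → Bool)) (_ : wcyl t ⊆ Yᶜ), wcyl t) = 0 := by
    refine measure_iUnion_null fun t => ?_
    by_cases h : wcyl t ⊆ Yᶜ
    · refine le_antisymm ?_ zero_le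
      exact (measure_mono (Set.iUnion_subset fun _ => subset_rfl)).trans (hzero t h).le
    · have he : (⋃ (_ : wcyl t ⊆ Yᶜ), wcyl t) = ∅ :=
        Set.iUnion_eq_empty.mpr fun hp => absurd hp h
      rw [he]
      exact measure_empty
  exact le_antisymm (this.trans hnull.le) zero_le

lemma wdet.mono {m m' : ℕ} {D : Set BinSeq} (h : wdet m D) (hm : m ≤ m') : wdet m' D :=
  fun y z hag => h y z fun i hi => hag i (hi.trans (by exact_mod_cast hm))

lemma binseq_eq_generateFrom :
    (inferInstance : MeasurableSpace BinSeq) =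
      MeasurableSpace.generateFrom {D : Set BinSeq | ∃ m, wdet m D} := by
  apply le_antisymm
  · rw [show (inferInstance : MeasurableSpace BinSeq) = MeasurableSpace.pi from rfl,
      MeasurableSpace.pi]
    refine iSup_le fun i => ?_
    intro s hs
    rw [MeasurableSpace.measurableSet_comap] at hs
    obtain ⟨t, -, rfl⟩ := hs
    refine MeasurableSpace.measurableSet_generateFrom ⟨i.natAbs, ?_⟩
    intro y z hag
    have : y i = z i := hag i (by rw [Int.abs_eq_natAbs])
    simp [Set.mem_preimage, this]
  · refine MeasurableSpace.generateFrom_le ?_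
    rintro D ⟨m, hD⟩
    exact hD.measurableSet

lemma ext_wdet (μ1 μ2 : Measure BinSeq) [IsProbabilityMeasure μ1] [IsProbabilityMeasure μ2]
    (h : ∀ (m : ℕ) (D : Set BinSeq), wdet m D → μ1 D = μ2 D) : μ1 = μ2 := by
  refine MeasureTheory.ext_of_generate_finite {D : Set BinSeq | ∃ m, wdet m D}
    binseq_eq_generateFrom ?_ ?_ ?_
  · rintro D1 ⟨m1, h1⟩ D2 ⟨m2, h2⟩ -
    refine ⟨max m1 m2, ?_⟩
    intro y z hag
    have e1 := (h1.mono (le_max_left m1 m2)) y z hag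
    have e2 := (h2.mono (le_max_right m1 m2)) y z hag
    constructor <;> rintro ⟨a, b⟩ <;> exact ⟨by tauto, by tauto⟩
  · rintro D ⟨m, hD⟩
    exact h m D hD
  · simp

-- §4 cylinders on the product space

/-- enumeration of the coordinates of `BinSeq × BinSeq` -/
noncomputable def idx : (ℤ ⊕ ℤ) ≃ ℕ := (Denumerable.eqv (ℤ ⊕ ℤ))

def pt : BinSeq × BinSeq → (ℤ ⊕ ℤ) → Bool := fun p => Sum.elim p.1 p.2

noncomputable def proj2 (n : ℕ) : BinSeq × BinSeq → (Fin n → Bool) :=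
  fun p k => pt p (idx.symm k)

def Cyl (n : ℕ) (s : Fin n → Bool) : Set (BinSeq × BinSeq) := proj2 n ⁻¹' {s}

def det2 (n : ℕ) (D : Set (BinSeq × BinSeq)) : Prop :=
  ∀ p q, proj2 n p = proj2 n q → (p ∈ D ↔ q ∈ D)

lemma measurable_pt (j : ℤ ⊕ ℤ) : Measurable (fun p => pt p j) := by
  cases j with
  | inl i => exact (measurable_pi_apply i).comp measurable_fst
  | inr i => exact (measurable_pi_apply i).comp measurable_snd

lemma measurable_proj2 (n : ℕ) : Measurable (proj2 n) :=
  measurable_pi_lambda _ fun k => measurable_pt _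

lemma measurableSet_Cyl (n : ℕ) (s : Fin n → Bool) : MeasurableSet (Cyl n s) :=
  measurable_proj2 n (measurableSet_finBool _)

lemma pt_eq_of_proj2_eq {n : ℕ} {p q : BinSeq × BinSeq} (h : proj2 n p = proj2 n q)
    {j : ℤ ⊕ ℤ} (hj : idx j < n) : pt p j = pt q j := by
  have := congrFun h ⟨idx j, hj⟩
  simpa [proj2] using this

lemma det2.eq_preimage {n : ℕ} {D : Set (BinSeq × BinSeq)} (h : det2 n D) :
    D = proj2 n ⁻¹' (proj2 n '' D) := by
  ext p
  constructor
  · exact fun hp => Set.mem_image_of_mem _ hp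
  · rintro ⟨q, hq, hqp⟩
    exact (h q p hqp).mp hq

lemma det2.measurableSet {n : ℕ} {D : Set (BinSeq × BinSeq)} (h : det2 n D) :
    MeasurableSet D := by
  rw [h.eq_preimage]
  exact measurable_proj2 n (measurableSet_finBool _)

lemma det2.mono {n n' : ℕ} {D : Set (BinSeq × BinSeq)} (h : det2 n D) (hn : n ≤ n') :
    det2 n' D := by
  intro p q hpq
  refine h p q ?_
  funext k
  have := congrFun hpq (Fin.castLE hn k)
  simpa [proj2] using this

lemma Cyl_disjoint {n : ℕ} {s t : Fin n → Bool} (hst : s ≠ t) :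
    Disjoint (Cyl n s) (Cyl n t) := by
  rw [Set.disjoint_left]
  rintro p hp hq
  exact hst (hp.symm.trans hq)

lemma measure_preimage_proj2 (μ : Measure (BinSeq × BinSeq)) (n : ℕ)
    (S : Set (Fin n → Bool)) :
    μ (proj2 n ⁻¹' S) = ∑ s ∈ Finset.univ.filter (· ∈ S), μ (Cyl n s) := by
  have hun : proj2 n ⁻¹' S = ⋃ s ∈ Finset.univ.filter (· ∈ S), Cyl n s := by
    ext p
    simp only [Set.mem_preimage, Set.mem_iUnion, Finset.mem_filter, Finset.mem_univ, true_and,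
      Cyl, Set.mem_singleton_iff]
    constructor
    · exact fun hp => ⟨proj2 n p, hp, rfl⟩
    · rintro ⟨s, hs, rfl⟩
      exact hs
  rw [hun, measure_biUnion_finset ?_ (fun s _ => measurableSet_Cyl n s)]
  intro s hs t ht hst
  exact Cyl_disjoint hst

lemma tendsto_measure_det2 (ρs : ℕ → Measure (BinSeq × BinSeq)) (ρ : Measure (BinSeq × BinSeq))
    (hfin : ∀ j, IsProbabilityMeasure (ρs j)) [IsProbabilityMeasure ρ]
    (hconv : ∀ (n : ℕ) (s : Fin n → Bool),
      Tendsto (fun j => (ρs j (Cyl n s)).toReal) atTop (𝓝 ((ρ (Cyl n s)).toReal)))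
    {n : ℕ} {D : Set (BinSeq × BinSeq)} (hD : det2 n D) :
    Tendsto (fun j => (ρs j D).toReal) atTop (𝓝 ((ρ D).toReal)) := by
  have hDeq := hD.eq_preimage
  have key : ∀ (μ : Measure (BinSeq × BinSeq)), IsProbabilityMeasure μ →
      (μ D).toReal = ∑ s ∈ Finset.univ.filter (· ∈ proj2 n '' D), (μ (Cyl n s)).toReal := by
    intro μ hμ
    rw [hDeq, measure_preimage_proj2 μ n (proj2 n '' D), ENNReal.toReal_sum]
    · rw [← hDeq]
    · intro s _
      exact measure_ne_top μ _
  have h1 : ∀ j, (ρs j D).toReal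
      = ∑ s ∈ Finset.univ.filter (· ∈ proj2 n '' D), (ρs j (Cyl n s)).toReal :=
    fun j => key (ρs j) (hfin j)
  rw [key ρ inferInstance]
  simp_rw [h1]
  exact tendsto_finset_sum _ fun s _ => hconv n s

lemma omega2_eq_generateFrom :
    (inferInstance : MeasurableSpace (BinSeq × BinSeq)) =
      MeasurableSpace.generateFrom {D : Set (BinSeq × BinSeq) | ∃ n, det2 n D} := by
  apply le_antisymm
  · rw [show (inferInstance : MeasurableSpace (BinSeq × BinSeq)) =
      MeasurableSpace.comap Prod.fst MeasurableSpace.pi ⊔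
      MeasurableSpace.comap Prod.snd MeasurableSpace.pi from rfl]
    rw [MeasurableSpace.pi]
    refine sup_le ?_ ?_
    · rw [MeasurableSpace.comap_iSup]
      refine iSup_le fun i => ?_
      rw [MeasurableSpace.comap_comp]
      intro s hs
      rw [MeasurableSpace.measurableSet_comap] at hs
      obtain ⟨t, -, rfl⟩ := hs
      refine MeasurableSpace.measurableSet_generateFrom ⟨idx (Sum.inl i) + 1, ?_⟩
      intro p q hpq
      have : pt p (Sum.inl i) = pt q (Sum.inl i) :=
        pt_eq_of_proj2_eq hpq (Nat.lt_succ_self _)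
      show p.1 i ∈ t ↔ q.1 i ∈ t
      rw [show p.1 i = pt p (Sum.inl i) from rfl, show q.1 i = pt q (Sum.inl i) from rfl, this]
    · rw [MeasurableSpace.comap_iSup]
      refine iSup_le fun i => ?_
      rw [MeasurableSpace.comap_comp]
      intro s hs
      rw [MeasurableSpace.measurableSet_comap] at hs
      obtain ⟨t, -, rfl⟩ := hs
      refine MeasurableSpace.measurableSet_generateFrom ⟨idx (Sum.inr i) + 1, ?_⟩
      intro p q hpq
      have : pt p (Sum.inr i) = pt q (Sum.inr i) :=
        pt_eq_of_proj2_eq hpq (Nat.lt_succ_self _)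
      show p.2 i ∈ t ↔ q.2 i ∈ t
      rw [show p.2 i = pt p (Sum.inr i) from rfl, show q.2 i = pt q (Sum.inr i) from rfl, this]
  · refine MeasurableSpace.generateFrom_le ?_
    rintro D ⟨n, hD⟩
    exact hD.measurableSet

lemma ext_det2 (μ1 μ2 : Measure (BinSeq × BinSeq)) [IsProbabilityMeasure μ1]
    [IsProbabilityMeasure μ2]
    (h : ∀ (n : ℕ) (D : Set (BinSeq × BinSeq)), det2 n D → μ1 D = μ2 D) : μ1 = μ2 := by
  refine MeasureTheory.ext_of_generate_finite {D : Set (BinSeq × BinSeq) | ∃ n, det2 n D}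
    omega2_eq_generateFrom ?_ ?_ ?_
  · rintro D1 ⟨n1, h1⟩ D2 ⟨n2, h2⟩ -
    refine ⟨max n1 n2, ?_⟩
    intro p q hpq
    have e1 := (h1.mono (le_max_left n1 n2)) p q hpq
    have e2 := (h2.mono (le_max_right n1 n2)) p q hpq
    constructor <;> rintro ⟨a, b⟩ <;> exact ⟨by tauto, by tauto⟩
  · rintro D ⟨n, hD⟩
    exact h n D hD
  · simp

-- §5 construction of a measure with prescribed consistent cylinder values

section Tree

variable (a : ∀ n : ℕ, (Fin n → Bool) → ℝ)

/-- left endpoints of the tree of intervals -/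
noncomputable def Ltree : ∀ n : ℕ, (Fin n → Bool) → ℝ
  | 0, _ => 0
  | (n+1), t => Ltree n (Fin.init t) +
      (if t (Fin.last n) then a (n+1) (Fin.snoc (Fin.init t) false) else 0)

/-- the tree of half-open intervals -/
noncomputable def Itree (n : ℕ) (s : Fin n → Bool) : Set ℝ :=
  Set.Ico (Ltree a n s) (Ltree a n s + a n s)

lemma Ltree_snoc_false {n : ℕ} (s : Fin n → Bool) :
    Ltree a (n+1) (Fin.snoc s false) = Ltree a n s := by
  simp [Ltree, Fin.init_snoc, Fin.snoc_last]

lemma Ltree_snoc_true {n : ℕ} (s : Fin n → Bool) :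
    Ltree a (n+1) (Fin.snoc s true) = Ltree a n s + a (n+1) (Fin.snoc s false) := by
  simp [Ltree, Fin.init_snoc, Fin.snoc_last]

variable (hnn : ∀ n s, 0 ≤ a n s)
  (hcons : ∀ n s, a n s = a (n+1) (Fin.snoc s false) + a (n+1) (Fin.snoc s true))

include hnn hcons in
lemma Itree_union {n : ℕ} (s : Fin n → Bool) :
    Itree a (n+1) (Fin.snoc s false) ∪ Itree a (n+1) (Fin.snoc s true) = Itree a n s := by
  rw [Itree, Itree, Itree, Ltree_snoc_false, Ltree_snoc_true]
  rw [Set.Ico_union_Ico_eq_Ico (by have := hnn (n+1) (Fin.snoc s false); linarith)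
    (by have := hnn (n+1) (Fin.snoc s true); linarith)]
  rw [hcons n s]
  ring_nf

lemma Itree_halves_disjoint {n : ℕ} (s : Fin n → Bool) :
    Disjoint (Itree a (n+1) (Fin.snoc s false)) (Itree a (n+1) (Fin.snoc s true)) := by
  rw [Itree, Itree, Ltree_snoc_false, Ltree_snoc_true]
  exact Set.Ico_disjoint_Ico_same

include hnn hcons in
lemma Itree_subset {n : ℕ} (t : Fin (n+1) → Bool) :
    Itree a (n+1) t ⊆ Itree a n (Fin.init t) := by
  have h := Itree_union a hnn hcons (Fin.init t)
  have hself : Fin.snoc (Fin.init t) (t (Fin.last n)) = t := Fin.snoc_init_self t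
  rcases hb : t (Fin.last n) with _ | _ <;> rw [hb] at hself <;> conv_lhs => rw [← hself]
  · rw [← h]
    exact Set.subset_union_left
  · rw [← h]
    exact Set.subset_union_right

include hnn hcons in
lemma Itree_disjoint : ∀ (n : ℕ) (s t : Fin n → Bool), s ≠ t →
    Disjoint (Itree a n s) (Itree a n t) := by
  intro n
  induction n with
  | zero =>
    intro s t hst
    exact absurd (funext fun k => k.elim0) hst
  | succ n ih =>
    intro s t hst
    by_cases hinit : Fin.init s = Fin.init t
    · have hlast : s (Fin.last n) ≠ t (Fin.last n) := by
        intro hl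
        apply hst
        rw [← Fin.snoc_init_self s, ← Fin.snoc_init_self t, hinit, hl]
      have hs' : Fin.snoc (Fin.init s) (s (Fin.last n)) = s := Fin.snoc_init_self s
      have ht' : Fin.snoc (Fin.init t) (t (Fin.last n)) = t := Fin.snoc_init_self t
      rcases h1 : s (Fin.last n) with _ | _ <;> rcases h2 : t (Fin.last n) with _ | _
      · rw [h1, h2] at hlast; exact absurd rfl hlast
      · rw [h1] at hs'; rw [h2] at ht'
        rw [← hs', ← ht', hinit]
        exact Itree_halves_disjoint a (Fin.init t)
      · rw [h1] at hs'; rw [h2] at ht'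
        rw [← hs', ← ht', hinit]
        exact (Itree_halves_disjoint a (Fin.init t)).symm
      · rw [h1, h2] at hlast; exact absurd rfl hlast
    · exact ((ih (Fin.init s) (Fin.init t) hinit).mono
        (Itree_subset a hnn hcons s) (Itree_subset a hnn hcons t))

/-- the digit functions -/
noncomputable def gdig (t : ℝ) (n : ℕ) : Bool :=
  if (∃ s : Fin n → Bool, t ∈ Itree a (n+1) (Fin.snoc s true)) then true else false

/-- prefix of the digit sequence -/
noncomputable def pre (t : ℝ) (n : ℕ) : Fin n → Bool := fun k => gdig a t k

lemma pre_succ (t : ℝ) (n : ℕ) :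
    pre a t (n+1) = Fin.snoc (pre a t n) (gdig a t n) := by
  funext k
  refine Fin.lastCases ?_ (fun j => ?_) k
  · rw [Fin.snoc_last]
    rfl
  · rw [Fin.snoc_castSucc]
    show gdig a t ((Fin.castSucc j) : ℕ) = gdig a t (j : ℕ)
    rw [Fin.coe_castSucc]

variable (h0 : ∀ s : Fin 0 → Bool, a 0 s = 1)

include hnn hcons h0 in
lemma mem_Itree_pre : ∀ (n : ℕ) (t : ℝ), t ∈ Set.Ico (0:ℝ) 1 → t ∈ Itree a n (pre a t n) := by
  intro n
  induction n with
  | zero =>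
    intro t ht
    rw [Itree, show Ltree a 0 (pre a t 0) = 0 from rfl, h0]
    simpa using ht
  | succ n ih =>
    intro t ht
    have ht' : t ∈ Itree a n (pre a t n) := ih t ht
    rw [← Itree_union a hnn hcons (pre a t n)] at ht'
    rcases ht' with hl | hr
    · -- t in false half : digit n is false
      have hg : gdig a t n = false := by
        rw [gdig, if_neg]
        rintro ⟨s', hs'⟩
        have h1 : t ∈ Itree a n s' := by
          have hsub := Itree_subset a hnn hcons (Fin.snoc s' true)
          rw [Fin.init_snoc] at hsub
          exact hsub hs'
        have hpre : s' = pre a t n := by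
          by_contra hne
          exact (Itree_disjoint a hnn hcons n s' (pre a t n) hne).le_bot ⟨h1, ih t ht⟩
        rw [hpre] at hs'
        exact (Itree_halves_disjoint a (pre a t n)).le_bot ⟨hl, hs'⟩
      rw [pre_succ, hg]
      exact hl
    · have hg : gdig a t n = true := by
        rw [gdig, if_pos]
        exact ⟨pre a t n, hr⟩
      rw [pre_succ, hg]
      exact hr

include hnn hcons h0 in
lemma Itree_subset_Ico01 : ∀ (n : ℕ) (s : Fin n → Bool), Itree a n s ⊆ Set.Ico (0:ℝ) 1 := by
  intro n
  induction n with
  | zero =>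
    intro s
    rw [Itree, show Ltree a 0 s = 0 from rfl, h0]
    simp
  | succ n ih =>
    intro s
    exact (Itree_subset a hnn hcons s).trans (ih (Fin.init s))

include hnn hcons h0 in
lemma mem_Itree_iff {n : ℕ} {s : Fin n → Bool} {t : ℝ} (ht : t ∈ Set.Ico (0:ℝ) 1) :
    t ∈ Itree a n s ↔ pre a t n = s := by
  constructor
  · intro hts
    by_contra hne
    exact (Itree_disjoint a hnn hcons n (pre a t n) s (fun h => hne h)).le_bot
      ⟨mem_Itree_pre a hnn hcons h0 n t ht, hts⟩
  · rintro rfl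
    exact mem_Itree_pre a hnn hcons h0 n t ht

lemma measurableSet_Itree (n : ℕ) (s : Fin n → Bool) : MeasurableSet (Itree a n s) :=
  measurableSet_Ico

lemma measurable_gdig (n : ℕ) : Measurable (fun t => gdig a t n) := by
  refine measurable_to_countable' fun b => ?_
  have htrue : (fun t => gdig a t n) ⁻¹' {true} =
      ⋃ s : Fin n → Bool, Itree a (n+1) (Fin.snoc s true) := by
    ext t
    simp only [Set.mem_preimage, Set.mem_singleton_iff, Set.mem_iUnion, gdig]
    constructor
    · intro h
      by_contra hc
      push_neg at hc
      rw [if_neg (by rintro ⟨s, hs⟩; exact hc s hs)] at h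
      exact Bool.false_ne_true h
    · rintro ⟨s, hs⟩
      rw [if_pos ⟨s, hs⟩]
  rcases b with _ | _
  · have : (fun t => gdig a t n) ⁻¹' {false} =
        ((fun t => gdig a t n) ⁻¹' {true})ᶜ := by
      ext t
      simp only [Set.mem_preimage, Set.mem_singleton_iff, Set.mem_compl_iff]
      rcases h : gdig a t n <;> simp
    rw [this, htrue]
    exact (MeasurableSet.iUnion fun s => measurableSet_Itree a _ _).compl
  · rw [htrue]
    exact MeasurableSet.iUnion fun s => measurableSet_Itree a _ _

/-- the measurable map from `[0,1)` to the product space -/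
noncomputable def Gmap : ℝ → BinSeq × BinSeq := fun t =>
  (fun i => gdig a t (idx (Sum.inl i)), fun i => gdig a t (idx (Sum.inr i)))

lemma measurable_Gmap : Measurable (Gmap a) :=
  (measurable_pi_lambda _ fun i => measurable_gdig a _).prodMk
    (measurable_pi_lambda _ fun i => measurable_gdig a _)

lemma proj2_Gmap (n : ℕ) (t : ℝ) : proj2 n (Gmap a t) = pre a t n := by
  funext k
  show pt (Gmap a t) (idx.symm k) = gdig a t k
  have hpt : ∀ j, pt (Gmap a t) j = gdig a t (idx j) := by
    intro j
    cases j <;> rfl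
  rw [hpt, Equiv.apply_symm_apply]

include hnn hcons h0 in
lemma Gmap_preimage_Cyl (n : ℕ) (s : Fin n → Bool) :
    Gmap a ⁻¹' (Cyl n s) ∩ Set.Ico (0:ℝ) 1 = Itree a n s := by
  ext t
  simp only [Set.mem_inter_iff, Set.mem_preimage, Cyl, Set.mem_singleton_iff]
  constructor
  · rintro ⟨h1, h2⟩
    rw [proj2_Gmap] at h1
    exact (mem_Itree_iff a hnn hcons h0 h2).mpr h1
  · intro h
    have h2 : t ∈ Set.Ico (0:ℝ) 1 := Itree_subset_Ico01 a hnn hcons h0 n s h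
    refine ⟨?_, h2⟩
    rw [proj2_Gmap]
    exact (mem_Itree_iff a hnn hcons h0 h2).mp h

/-- the limit measure -/
noncomputable def limMeas : Measure (BinSeq × BinSeq) :=
  Measure.map (Gmap a) (MeasureTheory.volume.restrict (Set.Ico (0:ℝ) 1))

include hnn hcons h0 in
lemma limMeas_Cyl (n : ℕ) (s : Fin n → Bool) :
    limMeas a (Cyl n s) = ENNReal.ofReal (a n s) := by
  rw [limMeas, Measure.map_apply (measurable_Gmap a) (measurableSet_Cyl n s),
    Measure.restrict_apply (measurable_Gmap a (measurableSet_Cyl n s)),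
    Gmap_preimage_Cyl a hnn hcons h0, Itree, Real.volume_Ico, add_sub_cancel_left]

lemma limMeas_prob : IsProbabilityMeasure (limMeas a) := by
  constructor
  rw [limMeas, Measure.map_apply (measurable_Gmap a) MeasurableSet.univ, Set.preimage_univ,
    Measure.restrict_apply MeasurableSet.univ, Set.univ_inter, Real.volume_Ico]
  simp

end Tree

-- §6 preparation lemmas for the main theorem

def shmap : ℤ ⊕ ℤ → ℤ ⊕ ℤ := Sum.map (· + 1) (· + 1)

lemma pt_shift2 (p : BinSeq × BinSeq) (j : ℤ ⊕ ℤ) : pt (shift2 p) j = pt p (shmap j) := by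
  cases j <;> rfl

lemma det2_shift2_preimage {n : ℕ} {D : Set (BinSeq × BinSeq)} (hD : det2 n D) :
    det2 ((Finset.univ : Finset (Fin n)).sup (fun k => idx (shmap (idx.symm (k : ℕ)))) + 1)
      (shift2 ⁻¹' D) := by
  set M := (Finset.univ : Finset (Fin n)).sup (fun k => idx (shmap (idx.symm (k : ℕ)))) + 1
    with hM
  intro p q hpq
  refine hD (shift2 p) (shift2 q) ?_
  funext k
  show pt (shift2 p) (idx.symm (k : ℕ)) = pt (shift2 q) (idx.symm (k : ℕ))
  rw [pt_shift2, pt_shift2]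
  refine pt_eq_of_proj2_eq hpq ?_
  have : idx (shmap (idx.symm (k : ℕ))) ≤
      (Finset.univ : Finset (Fin n)).sup (fun k => idx (shmap (idx.symm (k : ℕ)))) :=
    Finset.le_sup (f := fun k : Fin n => idx (shmap (idx.symm (k : ℕ)))) (Finset.mem_univ k)
  omega

lemma det2_fst_preimage {m : ℕ} {D : Set BinSeq} (hD : wdet m D) :
    det2 (((Finset.Icc (-(m:ℤ)) (m:ℤ)).sup fun i => idx (Sum.inl i)) + 1)
      (Prod.fst ⁻¹' D) := by
  intro p q hpq
  show p.1 ∈ D ↔ q.1 ∈ D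
  refine hD p.1 q.1 ?_
  intro i hi
  have hmem : i ∈ Finset.Icc (-(m:ℤ)) (m:ℤ) := by
    rw [Finset.mem_Icc]
    rw [abs_le] at hi
    exact hi
  have hle : idx (Sum.inl i) ≤ (Finset.Icc (-(m:ℤ)) (m:ℤ)).sup fun i => idx (Sum.inl i) :=
    Finset.le_sup (f := fun i : ℤ => idx (Sum.inl i)) hmem
  exact pt_eq_of_proj2_eq (j := Sum.inl i) hpq (by omega)

lemma det2_Mmul_preimage {m : ℕ} {D : Set BinSeq} (hD : wdet m D) :
    det2 (((Finset.Icc (-(m:ℤ)) (m:ℤ)).sup fun i => max (idx (Sum.inl i)) (idx (Sum.inr i))) + 1)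
      (Mmul ⁻¹' D) := by
  intro p q hpq
  show Mmul p ∈ D ↔ Mmul q ∈ D
  refine hD (Mmul p) (Mmul q) ?_
  intro i hi
  have hmem : i ∈ Finset.Icc (-(m:ℤ)) (m:ℤ) := by
    rw [Finset.mem_Icc]
    rw [abs_le] at hi
    exact hi
  have hle : max (idx (Sum.inl i)) (idx (Sum.inr i)) ≤
      (Finset.Icc (-(m:ℤ)) (m:ℤ)).sup fun i => max (idx (Sum.inl i)) (idx (Sum.inr i)) :=
    Finset.le_sup (f := fun i : ℤ => max (idx (Sum.inl i)) (idx (Sum.inr i))) hmem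
  have ha : idx (Sum.inl i) ≤
      (Finset.Icc (-(m:ℤ)) (m:ℤ)).sup fun i => max (idx (Sum.inl i)) (idx (Sum.inr i)) :=
    le_trans (le_max_left _ _) hle
  have hb : idx (Sum.inr i) ≤
      (Finset.Icc (-(m:ℤ)) (m:ℤ)).sup fun i => max (idx (Sum.inl i)) (idx (Sum.inr i)) :=
    le_trans (le_max_right _ _) hle
  have h1 : pt p (Sum.inl i) = pt q (Sum.inl i) :=
    pt_eq_of_proj2_eq (j := Sum.inl i) hpq (by omega)
  have h2 : pt p (Sum.inr i) = pt q (Sum.inr i) :=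
    pt_eq_of_proj2_eq (j := Sum.inr i) hpq (by omega)
  show (p.1 i && p.2 i) = (q.1 i && q.2 i)
  rw [show p.1 i = pt p (Sum.inl i) from rfl, show p.2 i = pt p (Sum.inr i) from rfl,
    show q.1 i = pt q (Sum.inl i) from rfl, show q.2 i = pt q (Sum.inr i) from rfl, h1, h2]

lemma proj2_succ (n : ℕ) (p : BinSeq × BinSeq) :
    proj2 (n+1) p = Fin.snoc (proj2 n p) (pt p (idx.symm n)) := by
  funext k
  refine Fin.lastCases ?_ (fun j => ?_) k
  · rw [Fin.snoc_last]
    show pt p (idx.symm ((Fin.last n : ℕ))) = _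
    rw [Fin.val_last]
  · rw [Fin.snoc_castSucc]
    show pt p (idx.symm ((Fin.castSucc j : ℕ))) = pt p (idx.symm (j : ℕ))
    rw [Fin.coe_castSucc]

lemma Cyl_zero (s : Fin 0 → Bool) : Cyl 0 s = Set.univ := by
  ext p
  simp only [Cyl, Set.mem_preimage, Set.mem_singleton_iff, Set.mem_univ, iff_true]
  funext k
  exact k.elim0

lemma Cyl_split (n : ℕ) (s : Fin n → Bool) :
    Cyl n s = Cyl (n+1) (Fin.snoc s false) ∪ Cyl (n+1) (Fin.snoc s true) := by
  ext p
  simp only [Cyl, Set.mem_preimage, Set.mem_singleton_iff, Set.mem_union]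
  constructor
  · intro hp
    rcases hb : pt p (idx.symm (n : ℕ)) with _ | _
    · left; rw [proj2_succ, hp, hb]
    · right; rw [proj2_succ, hp, hb]
  · rintro (h | h) <;>
    · have := congrArg Fin.init h
      rw [proj2_succ, Fin.init_snoc, Fin.init_snoc] at this
      exact this

lemma snoc_false_ne_true {n : ℕ} (s : Fin n → Bool) :
    Fin.snoc s false ≠ (Fin.snoc s true : Fin (n+1) → Bool) := by
  intro h
  have := congrFun h (Fin.last n)
  rw [Fin.snoc_last, Fin.snoc_last] at this
  exact Bool.false_ne_true this

lemma shift_comp_Mmul : shift ∘ Mmul = Mmul ∘ shift2 := rfl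

end Stmt5Aux

/-- Let `(x_K)` be a good sequence with limit `x`, and suppose each
`[𝟎, x_K]‾` is measure-theoretically subordinate with base measure `ν_K`. Then both
`⋂_K [𝟎, x_K]‾` and `[𝟎, x]‾` are measure-theoretically subordinate with base measure
`ν_∞ = lim ν_K`. -/
theorem stmt5 (x : ℕ → BinSeq) (xinf : BinSeq) (N : ℕ → ℕ)
    (ν : ℕ → Measure BinSeq) (νinf : Measure BinSeq)
    (hmono : ∀ n : ℤ, Antitone (fun K => x K n))
    (hlim : ∀ n : ℤ, ∃ K0, ∀ K ≥ K0, x K n = xinf n)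
    (hN : StrictMono N)
    (hP : ∀ K, ν K ∈ InvProb shift) (hPinf : νinf ∈ InvProb shift)
    (hqg : ∀ K, QuasiGenericAlong shift (x K) N (ν K))
    (hqginf : QuasiGenericAlong shift xinf N νinf)
    (hdens : Filter.Tendsto (fun K => ((ν K) (cylB true)).toReal) Filter.atTop
      (nhds ((νinf (cylB true)).toReal)))
    (hsubK : ∀ K, Subord (closure (sandwichSet (fun _ => false) (x K))) (ν K)) :
    Subord (⋂ K, closure (sandwichSet (fun _ => false) (x K))) νinf ∧
    Subord (closure (sandwichSet (fun _ => false) xinf)) νinf := by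
  have hxle : ∀ K (n : ℤ), xinf n ≤ x K n := by
    intro K n
    obtain ⟨K0, hK0⟩ := hlim n
    have h1 : x (max K K0) n = xinf n := hK0 _ (le_max_right K K0)
    have h2 : x (max K K0) n ≤ x K n := hmono n (le_max_left K K0)
    rw [← h1]
    exact h2
  set Y := closure (sandwichSet (fun _ => false) xinf) with hYdef
  have hYm : MeasurableSet Y := isClosed_closure.measurableSet
  have hYsub : ∀ K, Y ⊆ closure (sandwichSet (fun _ => false) (x K)) := by
    intro K
    apply closure_mono
    rintro z ⟨k, y, h0, hy, rfl⟩
    exact ⟨k, y, h0, fun n => (hy n).trans (hxle K n), rfl⟩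
  have hY1 : νinf Y = 1 := closure_sandwich_measure_one xinf N νinf hPinf hqginf
  -- (B) the candidate set is contained in 𝓜(Y)
  have hBY : ∀ μ : Measure BinSeq, (∃ ρ2 ∈ InvProb shift2,
      Measure.map Prod.fst ρ2 = νinf ∧ Measure.map Mmul ρ2 = μ) → μ ∈ MeasOn Y := by
    rintro μ ⟨ρ2, ⟨hρp, hρi⟩, hfst, hMm⟩
    haveI := hρp
    have hμp : IsProbabilityMeasure μ :=
      hMm ▸ Measure.isProbabilityMeasure_map measurable_Mmul.aemeasurable
    have hμi : Measure.map shift μ = μ := by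
      rw [← hMm, Measure.map_map measurable_shift measurable_Mmul, shift_comp_Mmul,
        ← Measure.map_map measurable_Mmul measurable_shift2, hρi]
    refine ⟨⟨hμp, hμi⟩, ?_⟩
    have hsub : Prod.fst ⁻¹' Y ⊆ Mmul ⁻¹' Y := by
      intro p hp
      exact closure_sandwich_downward xinf hp (fun n => Bool.and_le_left _ _)
    have h1 : μ Y = ρ2 (Mmul ⁻¹' Y) := by
      rw [← hMm, Measure.map_apply measurable_Mmul hYm]
    have h2 : ρ2 (Prod.fst ⁻¹' Y) = 1 := by
      rw [← Measure.map_apply measurable_fst hYm, hfst, hY1]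
    have h3 : (1 : ENNReal) ≤ μ Y := by
      rw [h1, ← h2]
      exact measure_mono hsub
    exact le_antisymm prob_le_one h3
  -- (C) 𝓜(Y) ⊆ 𝓜(⋂)
  have hCY : MeasOn Y ⊆ MeasOn (⋂ K, closure (sandwichSet (fun _ => false) (x K))) := by
    rintro μ ⟨⟨hp, hi⟩, h1⟩
    haveI := hp
    refine ⟨⟨hp, hi⟩, le_antisymm prob_le_one ?_⟩
    rw [← h1]
    exact measure_mono (Set.subset_iInter hYsub)
  -- (D) 𝓜(⋂) is contained in the candidate set
  have hDm : ∀ μ : Measure BinSeq,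
      μ ∈ MeasOn (⋂ K, closure (sandwichSet (fun _ => false) (x K))) →
      ∃ ρ2 ∈ InvProb shift2, Measure.map Prod.fst ρ2 = νinf ∧ Measure.map Mmul ρ2 = μ := by
    rintro μ ⟨⟨hμp, hμi⟩, hμ1⟩
    haveI := hμp
    have hKmem : ∀ K, μ ∈ MeasOn (closure (sandwichSet (fun _ => false) (x K))) := by
      intro K
      refine ⟨⟨hμp, hμi⟩, le_antisymm prob_le_one ?_⟩
      rw [← hμ1]
      exact measure_mono (Set.iInter_subset _ K)
    have hex : ∀ K, ∃ ρ2 ∈ InvProb shift2,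
        Measure.map Prod.fst ρ2 = ν K ∧ Measure.map Mmul ρ2 = μ := by
      intro K
      have h := hsubK K
      unfold Subord at h
      have hmem := hKmem K
      rw [h] at hmem
      exact hmem
    choose ρs hρmem hρfst hρM using hex
    have hρp : ∀ K, IsProbabilityMeasure (ρs K) := fun K => (hρmem K).1
    have hρi : ∀ K, Measure.map shift2 (ρs K) = ρs K := fun K => (hρmem K).2
    -- diagonal extraction of cylinder measures
    have hval : ∀ K (t : Σ n : ℕ, (Fin n → Bool)),
        ((ρs K) (Cyl t.1 t.2)).toReal ∈ Set.Icc (0:ℝ) 1 := by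
      intro K t
      refine ⟨ENNReal.toReal_nonneg, ?_⟩
      haveI := hρp K
      have h1 : (ρs K) (Cyl t.1 t.2) ≤ 1 := prob_le_one
      have h2 := ENNReal.toReal_mono ENNReal.one_ne_top h1
      simpa using h2
    set v : ℕ → ((Σ n : ℕ, (Fin n → Bool)) → Set.Icc (0:ℝ) 1) :=
      fun K t => ⟨((ρs K) (Cyl t.1 t.2)).toReal, hval K t⟩ with hv
    obtain ⟨aP, φ, hφ, hφt⟩ := CompactSpace.tendsto_subseq v
    set aR : ∀ n : ℕ, (Fin n → Bool) → ℝ := fun n s => (aP ⟨n, s⟩ : ℝ) with haR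
    have hconv : ∀ (n : ℕ) (s : Fin n → Bool),
        Tendsto (fun j => ((ρs (φ j)) (Cyl n s)).toReal) atTop (𝓝 (aR n s)) := by
      intro n s
      have h1 : Tendsto (fun j => (v ∘ φ) j ⟨n, s⟩) atTop (𝓝 (aP ⟨n, s⟩)) :=
        (tendsto_pi_nhds.mp hφt) ⟨n, s⟩
      exact (continuous_subtype_val.tendsto _).comp h1
    have hnn : ∀ n s, 0 ≤ aR n s := fun n s => (aP ⟨n, s⟩).2.1
    have h0 : ∀ s : Fin 0 → Bool, aR 0 s = 1 := by
      intro s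
      have hconst : ∀ j : ℕ, ((ρs (φ j)) (Cyl 0 s)).toReal = 1 := by
        intro j
        haveI := hρp (φ j)
        rw [Cyl_zero, measure_univ, ENNReal.toReal_one]
      have h1 := hconv 0 s
      simp_rw [hconst] at h1
      exact tendsto_nhds_unique h1 tendsto_const_nhds
    have hcons : ∀ n s, aR n s = aR (n+1) (Fin.snoc s false) + aR (n+1) (Fin.snoc s true) := by
      intro n s
      have hsumK : ∀ j : ℕ, ((ρs (φ j)) (Cyl n s)).toReal =
          ((ρs (φ j)) (Cyl (n+1) (Fin.snoc s false))).toReal +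
          ((ρs (φ j)) (Cyl (n+1) (Fin.snoc s true))).toReal := by
        intro j
        haveI := hρp (φ j)
        rw [Cyl_split n s,
          measure_union (Cyl_disjoint (snoc_false_ne_true s)) (measurableSet_Cyl _ _),
          ENNReal.toReal_add (measure_ne_top _ _) (measure_ne_top _ _)]
      have h1 := hconv n s
      simp_rw [hsumK] at h1
      exact tendsto_nhds_unique h1 ((hconv _ _).add (hconv _ _))
    set ρ := limMeas aR with hρdef
    haveI : IsProbabilityMeasure ρ := limMeas_prob aR
    have hCyl : ∀ n s, ρ (Cyl n s) = ENNReal.ofReal (aR n s) :=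
      limMeas_Cyl aR hnn hcons h0
    have hconv' : ∀ (n : ℕ) (s : Fin n → Bool),
        Tendsto (fun j => ((ρs (φ j)) (Cyl n s)).toReal) atTop (𝓝 ((ρ (Cyl n s)).toReal)) := by
      intro n s
      rw [hCyl, ENNReal.toReal_ofReal (hnn n s)]
      exact hconv n s
    have CONV : ∀ {n : ℕ} {D : Set (BinSeq × BinSeq)}, det2 n D →
        Tendsto (fun j => ((ρs (φ j)) D).toReal) atTop (𝓝 ((ρ D).toReal)) :=
      fun hD => tendsto_measure_det2 (fun j => ρs (φ j)) ρ (fun j => hρp (φ j)) hconv' hD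
    have hρinv : Measure.map shift2 ρ = ρ := by
      haveI : IsProbabilityMeasure (Measure.map shift2 ρ) :=
        Measure.isProbabilityMeasure_map measurable_shift2.aemeasurable
      refine ext_det2 _ _ ?_
      intro n D hD
      rw [Measure.map_apply measurable_shift2 hD.measurableSet]
      have h1 := CONV (det2_shift2_preimage hD)
      have h2 : ∀ j : ℕ, ((ρs (φ j)) (shift2 ⁻¹' D)).toReal = ((ρs (φ j)) D).toReal := by
        intro j
        conv_rhs => rw [← hρi (φ j)]
        rw [Measure.map_apply measurable_shift2 hD.measurableSet]
      simp_rw [h2] at h1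
      have h4 : (ρ (shift2 ⁻¹' D)).toReal = (ρ D).toReal := tendsto_nhds_unique h1 (CONV hD)
      exact (ENNReal.toReal_eq_toReal_iff' (measure_ne_top _ _) (measure_ne_top _ _)).mp h4
    have hfst : Measure.map Prod.fst ρ = νinf := by
      haveI : IsProbabilityMeasure (Measure.map (Prod.fst : BinSeq × BinSeq → BinSeq) ρ) :=
        Measure.isProbabilityMeasure_map measurable_fst.aemeasurable
      haveI : IsProbabilityMeasure νinf := hPinf.1
      refine ext_wdet _ _ ?_
      intro m D hD
      rw [Measure.map_apply measurable_fst hD.measurableSet]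
      have h1 := CONV (det2_fst_preimage hD)
      have h2 : ∀ j : ℕ, ((ρs (φ j)) (Prod.fst ⁻¹' D)).toReal = ((ν (φ j)) D).toReal := by
        intro j
        rw [← hρfst (φ j), Measure.map_apply measurable_fst hD.measurableSet]
      simp_rw [h2] at h1
      have h3 : Tendsto (fun j => ((ν (φ j)) D).toReal) atTop (𝓝 ((νinf D).toReal)) :=
        (heart x xinf N ν νinf hxle hN hP hPinf hqg hqginf hdens hD).comp hφ.tendsto_atTop
      have h4 := tendsto_nhds_unique h1 h3
      exact (ENNReal.toReal_eq_toReal_iff' (measure_ne_top _ _) (measure_ne_top _ _)).mp h4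
    have hMm : Measure.map Mmul ρ = μ := by
      haveI : IsProbabilityMeasure (Measure.map Mmul ρ) :=
        Measure.isProbabilityMeasure_map measurable_Mmul.aemeasurable
      refine ext_wdet _ _ ?_
      intro m D hD
      rw [Measure.map_apply measurable_Mmul hD.measurableSet]
      have h1 := CONV (det2_Mmul_preimage hD)
      have h2 : ∀ j : ℕ, ((ρs (φ j)) (Mmul ⁻¹' D)).toReal = (μ D).toReal := by
        intro j
        rw [← hρM (φ j), Measure.map_apply measurable_Mmul hD.measurableSet]
      simp_rw [h2] at h1
      have h4 := tendsto_nhds_unique h1 tendsto_const_nhds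
      exact (ENNReal.toReal_eq_toReal_iff' (measure_ne_top _ _) (measure_ne_top _ _)).mp h4
    exact ⟨ρ, ⟨inferInstance, hρinv⟩, hfst, hMm⟩
  constructor
  · show MeasOn _ = _
    apply Set.Subset.antisymm
    · intro μ hμ
      exact hDm μ hμ
    · intro μ hμ
      exact hCY (hBY μ hμ)
  · show MeasOn Y = _
    apply Set.Subset.antisymm
    · intro μ hμ
      exact hDm μ (hCY hμ)
    · intro μ hμ
      exact hBY μ hμ
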